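/- Let f : ℝ^d → ℝ be continuously differentiable and L-smooth with a nonempty set S of global minimizers, minimal value f⋆ = 0, S̃ = S, and suppose there exist c₁ > 0, c₂ ≥ 0 such that ⟨∇f(x), x − proj_{S}(x)⟩ ≥ c₁ f(x) − c₂ for all x ∈ ℝ^d (a relaxed aiming condition). Let x^{k+1} = x^k − γ^k ∇f(x^k) with γ^k = c₁ f(x^k)/‖∇f(x^k)‖². Then for every K ≥ 0: min_{0≤k≤K} f(x^k) ≤ 2L ‖x^0 − x^0_p‖²/(c₁² (K+1)) + 2c₂/c₁, where x^0_p := proj_{S}(x^0). -/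

import Mathlib

set_option maxHeartbeats 1000000
open scoped RealInnerProductSpace

lemma curve_deriv {d : ℕ} (f : EuclideanSpace ℝ (Fin d) → ℝ)
    (hf : ContDiff ℝ 1 f) (y v : EuclideanSpace ℝ (Fin d)) (t : ℝ) :
    HasDerivAt (fun t : ℝ => f (y + t • v)) ⟪gradient f (y + t • v), v⟫ t := by
  have h1 : HasDerivAt (fun t : ℝ => y + t • v) v t := by
    simpa using ((hasDerivAt_id t).smul_const v).const_add y
  have h2 : HasFDerivAt f (InnerProductSpace.toDual ℝ _ (gradient f (y + t • v))) (y + t • v) :=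
    ((hf.differentiable one_ne_zero) _).hasGradientAt.hasFDerivAt
  exact (h2.comp_hasDerivAt t h1)

lemma descent_lemma {d : ℕ} (f : EuclideanSpace ℝ (Fin d) → ℝ)
    (hf : ContDiff ℝ 1 f) (L : ℝ) (hL : 0 < L)
    (hsmooth : ∀ y z, ‖gradient f y - gradient f z‖ ≤ L * ‖y - z‖)
    (y z : EuclideanSpace ℝ (Fin d)) :
    f z ≤ f y + ⟪gradient f y, z - y⟫ + L / 2 * ‖z - y‖ ^ 2 := by
  set v := z - y with hv
  set h : ℝ → ℝ := fun t => f (y + t • v) - t * ⟪gradient f y, v⟫ - L * t ^ 2 * ‖v‖ ^ 2 / 2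
    with hh
  have hderiv : ∀ t : ℝ, HasDerivAt h
      (⟪gradient f (y + t • v), v⟫ - ⟪gradient f y, v⟫ - L * t * ‖v‖ ^ 2) t := by
    intro t
    have h1 := curve_deriv f hf y v t
    have h2 : HasDerivAt (fun t : ℝ => t * ⟪gradient f y, v⟫) ⟪gradient f y, v⟫ t := by
      simpa using (hasDerivAt_id t).mul_const (⟪gradient f y, v⟫)
    have h3 : HasDerivAt (fun t : ℝ => L * t ^ 2 * ‖v‖ ^ 2 / 2) (L * t * ‖v‖ ^ 2) t := by
      have := ((hasDerivAt_pow 2 t).const_mul L).mul_const (‖v‖ ^ 2)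
      have := this.div_const 2
      refine this.congr_deriv ?_
      rw [Nat.cast_ofNat, show (2:ℕ) - 1 = 1 from rfl, pow_one]; ring
    exact (h1.sub h2).sub h3
  have hanti : AntitoneOn h (Set.Icc (0:ℝ) 1) := by
    apply antitoneOn_of_deriv_nonpos (convex_Icc 0 1)
    · exact fun t _ => ((hderiv t).continuousAt).continuousWithinAt
    · exact fun t _ => ((hderiv t).differentiableAt).differentiableWithinAt
    · intro t ht
      rw [interior_Icc] at ht
      rw [(hderiv t).deriv]
      have hb : ⟪gradient f (y + t • v) - gradient f y, v⟫ ≤ L * t * ‖v‖ ^ 2 := by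
        calc ⟪gradient f (y + t • v) - gradient f y, v⟫
            ≤ ‖gradient f (y + t • v) - gradient f y‖ * ‖v‖ := real_inner_le_norm _ _
          _ ≤ (L * ‖(y + t • v) - y‖) * ‖v‖ := by
              exact mul_le_mul_of_nonneg_right (hsmooth _ _) (norm_nonneg _)
          _ = L * (|t| * ‖v‖) * ‖v‖ := by
              rw [add_sub_cancel_left, norm_smul, Real.norm_eq_abs]
          _ = L * t * ‖v‖ ^ 2 := by
              rw [abs_of_pos ht.1]; ring
      have := inner_sub_left (𝕜 := ℝ) (gradient f (y + t • v)) (gradient f y) v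
      linarith [hb, this.symm.le, this.le]
  have h10 := hanti (Set.left_mem_Icc.2 zero_le_one) (Set.right_mem_Icc.2 zero_le_one) zero_le_one
  have hz : y + (1:ℝ) • v = z := by rw [one_smul, hv]; abel
  have e0 : h 0 = f y := by simp [hh]
  have e1 : h 1 = f z - ⟪gradient f y, v⟫ - L * ‖v‖ ^ 2 / 2 := by
    simp only [hh, hz, one_pow, one_mul]; ring
  rw [e0, e1] at h10
  linarith

lemma grad_sq_le {d : ℕ} (f : EuclideanSpace ℝ (Fin d) → ℝ)
    (hf : ContDiff ℝ 1 f) (L : ℝ) (hL : 0 < L)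
    (hsmooth : ∀ y z, ‖gradient f y - gradient f z‖ ≤ L * ‖y - z‖)
    (hf0 : ∀ y, 0 ≤ f y) (y : EuclideanSpace ℝ (Fin d)) :
    ‖gradient f y‖ ^ 2 ≤ 2 * L * f y := by
  have hd := descent_lemma f hf L hL hsmooth y (y - L⁻¹ • gradient f y)
  have h0 := hf0 (y - L⁻¹ • gradient f y)
  have e1 : y - L⁻¹ • gradient f y - y = -(L⁻¹ • gradient f y) := by abel
  rw [e1, inner_neg_right, real_inner_smul_right, real_inner_self_eq_norm_sq,
    norm_neg, norm_smul, Real.norm_eq_abs, abs_of_pos (inv_pos.2 hL)] at hd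
  have hinv : L⁻¹ * L = 1 := inv_mul_cancel₀ hL.ne'
  have h2 : L / 2 * (L⁻¹ * ‖gradient f y‖) ^ 2 = L⁻¹ * ‖gradient f y‖ ^ 2 / 2 := by
    field_simp
  have h3 : L⁻¹ * ‖gradient f y‖ ^ 2 ≤ 2 * f y := by linarith
  calc ‖gradient f y‖ ^ 2 = L * (L⁻¹ * ‖gradient f y‖ ^ 2) := by
        rw [← mul_assoc, mul_inv_cancel₀ hL.ne', one_mul]
    _ ≤ L * (2 * f y) := by
        exact mul_le_mul_of_nonneg_left h3 hL.le
    _ = 2 * L * f y := by ring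

/-- Example 5 (smooth case): under the relaxed aiming condition
`⟨∇f(x), x − proj_S(x)⟩ ≥ c₁ f(x) − c₂` with `f⋆ = 0`, `L`-smoothness, and the
Polyak-type stepsize `γᵏ = c₁ f(xᵏ)/‖∇f(xᵏ)‖²`, gradient descent achieves an
`O(1/K)` rate for the minimum function value up to `2c₂/c₁`. -/
theorem aiming_condition_smooth_rate
    {d : ℕ} (f : EuclideanSpace ℝ (Fin d) → ℝ)
    (hf : ContDiff ℝ 1 f)
    (L : ℝ) (hL : 0 < L)
    (hsmooth : ∀ y z, ‖gradient f y - gradient f z‖ ≤ L * ‖y - z‖)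
    (S : Set (EuclideanSpace ℝ (Fin d)))
    (hSne : S.Nonempty)
    (hSmin : ∀ s ∈ S, ∀ y, f s ≤ f y)
    (hfstar : ∀ s ∈ S, f s = 0)
    (proj : EuclideanSpace ℝ (Fin d) → EuclideanSpace ℝ (Fin d))
    (hproj : ∀ y, proj y ∈ S ∧ ∀ z ∈ S, ‖y - proj y‖ ≤ ‖y - z‖)
    (c₁ c₂ : ℝ) (hc₁ : 0 < c₁) (hc₂ : 0 ≤ c₂)
    (hass : ∀ y, c₁ * f y - c₂ ≤ ⟪gradient f y, y - proj y⟫)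
    (x : ℕ → EuclideanSpace ℝ (Fin d)) (γ : ℕ → ℝ)
    (hupd : ∀ k, x (k + 1) = x k - γ k • gradient f (x k))
    (hγ : ∀ k, γ k = c₁ * f (x k) / ‖gradient f (x k)‖ ^ 2)
    (K : ℕ) :
    (Finset.range (K + 1)).inf' ⟨0, Finset.mem_range.mpr (Nat.succ_pos K)⟩ (fun k => f (x k)) ≤
      2 * L * ‖x 0 - proj (x 0)‖ ^ 2 / (c₁ ^ 2 * (K + 1)) + 2 * c₂ / c₁ := by
  obtain ⟨s₀, hs₀⟩ := hSne
  have hf0 : ∀ y, 0 ≤ f y := fun y => (hfstar s₀ hs₀) ▸ hSmin s₀ hs₀ y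
  have hgrad := grad_sq_le f hf L hL hsmooth hf0
  set m := (Finset.range (K + 1)).inf' ⟨0, Finset.mem_range.mpr (Nat.succ_pos K)⟩ (fun k => f (x k)) with hm
  have hm_le : ∀ k, k ≤ K → m ≤ f (x k) := fun k hk =>
    Finset.inf'_le _ (Finset.mem_range.2 (Nat.lt_succ_of_le hk))
  by_cases hcase : m ≤ 2 * c₂ / c₁
  · have h1 : (0:ℝ) ≤ 2 * L * ‖x 0 - proj (x 0)‖ ^ 2 / (c₁ ^ 2 * (K + 1)) := by positivity
    linarith
  push_neg at hcase
  have hB : 2 * c₂ < m * c₁ := (div_lt_iff₀ hc₁).1 hcase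
  set δ := c₁ ^ 2 * (m - 2 * c₂ / c₁) / (2 * L) with hδ
  have key : ∀ k, k ≤ K →
      ‖x (k+1) - proj (x (k+1))‖ ^ 2 + δ ≤ ‖x k - proj (x k)‖ ^ 2 := by
    intro k hk
    set g := gradient f (x k) with hg
    set p := proj (x k) with hp
    have hfk : 2 * c₂ / c₁ < f (x k) := lt_of_lt_of_le hcase (hm_le k hk)
    have hfkpos : 0 < f (x k) := by
      have hnn : (0:ℝ) ≤ 2 * c₂ / c₁ := by positivity
      linarith
    have hI : c₁ * f (x k) - c₂ ≤ ⟪g, x k - p⟫ := hass (x k)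
    have hIpos : 0 < c₁ * f (x k) - c₂ := by nlinarith [hm_le k hk]
    have hgne : g ≠ 0 := by
      intro hz
      rw [hz, inner_zero_left] at hI
      linarith
    have hG : 0 < ‖g‖ ^ 2 := pow_pos (norm_pos_iff.mpr hgne) 2
    have hG2 : ‖g‖ ^ 2 ≤ 2 * L * f (x k) := hgrad (x k)
    set t := γ k with ht0
    have htval : t = c₁ * f (x k) / ‖g‖ ^ 2 := hγ k
    have htG : t * ‖g‖ ^ 2 = c₁ * f (x k) := by
      rw [htval]; field_simp
    have ht : c₁ / (2 * L) ≤ t := by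
      rw [htval, div_le_div_iff₀ (by positivity) hG]
      nlinarith
    have expand : ‖x (k+1) - p‖ ^ 2 =
        ‖x k - p‖ ^ 2 - 2 * t * ⟪g, x k - p⟫ + t ^ 2 * ‖g‖ ^ 2 := by
      rw [hupd k]
      have e : x k - t • g - p = (x k - p) - t • g := by abel
      rw [e, norm_sub_sq_real, real_inner_smul_right, norm_smul, Real.norm_eq_abs,
        mul_pow, sq_abs, real_inner_comm]
      ring
    have hproj2 : ‖x (k+1) - proj (x (k+1))‖ ^ 2 ≤ ‖x (k+1) - p‖ ^ 2 := by
      have := (hproj (x (k+1))).2 p (hproj (x k)).1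
      exact pow_le_pow_left₀ (norm_nonneg _) this 2
    have hδval : δ * (2 * L) = c₁ * (m * c₁ - 2 * c₂) := by
      rw [hδ]; field_simp
    have hdec : -2 * t * ⟪g, x k - p⟫ + t ^ 2 * ‖g‖ ^ 2 ≤ -δ := by
      have h1 : t ^ 2 * ‖g‖ ^ 2 = t * (c₁ * f (x k)) := by
        rw [← htG]; ring
      have htpos : 0 < t := lt_of_lt_of_le (by positivity) ht
      have h2 : c₁ * f (x k) - 2 * c₂ ≥ m * c₁ - 2 * c₂ := by nlinarith [hm_le k hk]
      have h3 : 0 < m * c₁ - 2 * c₂ := by linarith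
      -- -2tI + t*c₁F = -t*(2I - c₁F) ≤ -t*(c₁F - 2c₂) ≤ -(c₁/(2L))*(m c₁-2c₂) = -δ
      have h4 : -2 * t * ⟪g, x k - p⟫ + t ^ 2 * ‖g‖ ^ 2 ≤ -(t * (c₁ * f (x k) - 2 * c₂)) := by
        rw [h1]; nlinarith
      have h5 : t * (c₁ * f (x k) - 2 * c₂) ≥ (c₁ / (2 * L)) * (m * c₁ - 2 * c₂) := by
        apply mul_le_mul ht (by linarith) (le_of_lt h3) (le_of_lt htpos)
      have h6 : (c₁ / (2 * L)) * (m * c₁ - 2 * c₂) = δ := by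
        field_simp
        linarith [hδval]
      linarith
    linarith [expand, hproj2, hdec]
  have hiter : ∀ j, j ≤ K + 1 →
      ‖x j - proj (x j)‖ ^ 2 + (j : ℝ) * δ ≤ ‖x 0 - proj (x 0)‖ ^ 2 := by
    intro j
    induction j with
    | zero => intro _; simp
    | succ n ih =>
      intro hn
      have h1 := key n (Nat.lt_succ_iff.1 hn)
      have h2 := ih (Nat.le_of_succ_le hn)
      push_cast
      linarith
  have hfin := hiter (K + 1) le_rfl
  have hD : (0:ℝ) ≤ ‖x (K+1) - proj (x (K+1))‖ ^ 2 := by positivity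
  have hfinal : ((K:ℝ) + 1) * δ ≤ ‖x 0 - proj (x 0)‖ ^ 2 := by
    push_cast at hfin
    linarith
  have hKpos : (0:ℝ) < c₁ ^ 2 * (K + 1) := by positivity
  have hδval : δ * (2 * L) = c₁ * (m * c₁ - 2 * c₂) := by
    rw [hδ]; field_simp
  have hcc : 2 * c₂ / c₁ * c₁ = 2 * c₂ := div_mul_cancel₀ _ hc₁.ne'
  have h8 : (m - 2 * c₂ / c₁) * c₁ ^ 2 = δ * (2 * L) := by
    linear_combination (-c₁) * hcc - hδval
  have h7 := mul_le_mul_of_nonneg_right hfinal (by positivity : (0:ℝ) ≤ 2 * L)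
  have hfin2 : (m - 2 * c₂ / c₁) * (c₁ ^ 2 * (K + 1)) ≤ 2 * L * ‖x 0 - proj (x 0)‖ ^ 2 := by
    calc (m - 2 * c₂ / c₁) * (c₁ ^ 2 * ((K:ℝ) + 1))
        = ((K:ℝ) + 1) * δ * (2 * L) := by rw [← mul_assoc]; nlinarith [h8]
      _ ≤ ‖x 0 - proj (x 0)‖ ^ 2 * (2 * L) := h7
      _ = 2 * L * ‖x 0 - proj (x 0)‖ ^ 2 := by ring
  rw [← sub_le_iff_le_add, le_div_iff₀ hKpos]
  exact hfin2
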